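/- Let 0 ≤ a < b, β > −1, γ ∈ ℝ with γ ≠ −1, y ∉ [a,b], and f ∈ C²[a,b]. For N ∈ ℕ with N ≥ 1, set h = (b−a)/N, x_t = a + t·h, and define E_N = ∫_a^b x^β |x−y|^γ f(x) dx − (1/h) ∑_{n=0}^{N−1} ((x_{n+1}^{β+1} − x_n^{β+1})/(β+1)) · ((sgn(x_{n+1}−y)·|x_{n+1}−y|^{γ+1} − sgn(x_n−y)·|x_n−y|^{γ+1})/(γ+1)) · f(x_{n+1/2}). Then there exists K > 0 such that for all N ≥ 1: |E_N| ≤ K/N² if a > 0, or if a = 0 and β ≥ 0, or if a = 0, β ∈ (−1,0) and the derivative of x ↦ |x−y|^γ f(x) vanishes at x = 0; and |E_N| ≤ K/N^{2+β} if a = 0 and β ∈ (−1,0). -/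

import Mathlib

open Filter MeasureTheory Set intervalIntegral
open scoped Interval

lemma aux_g2_int {γ y c d : ℝ} (hγ : γ ≠ -1) (hcd : c ≤ d) (hy : y < c ∨ d < y) :
    ∫ x in c..d, |x - y| ^ γ =
      (Real.sign (d - y) * |d - y| ^ (γ + 1) - Real.sign (c - y) * |c - y| ^ (γ + 1)) / (γ + 1) := by
  rcases hy with hy | hy
  · have h1 : ∀ x ∈ [[c, d]], |x - y| ^ γ = (x - y) ^ γ := by
      intro x hx
      rw [uIcc_of_le hcd] at hx
      rw [abs_of_pos (by linarith [hx.1])]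
    rw [integral_congr h1, integral_comp_sub_right (fun x => x ^ γ) y,
      integral_rpow (Or.inr ⟨hγ, by rw [uIcc_of_le (by linarith)]; intro h0; exact absurd h0.1 (by push_neg; linarith)⟩)]
    rw [Real.sign_of_pos (by linarith : (0:ℝ) < d - y), Real.sign_of_pos (by linarith : (0:ℝ) < c - y),
      abs_of_pos (by linarith : (0:ℝ) < d - y), abs_of_pos (by linarith : (0:ℝ) < c - y)]
    ring
  · have h1 : ∀ x ∈ [[c, d]], |x - y| ^ γ = (y - x) ^ γ := by
      intro x hx
      rw [uIcc_of_le hcd] at hx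
      rw [abs_of_neg (by linarith [hx.2]), neg_sub]
    rw [integral_congr h1, integral_comp_sub_left (fun x => x ^ γ) y,
      integral_rpow (Or.inr ⟨hγ, by rw [uIcc_of_le (by linarith)]; intro h0; exact absurd h0.1 (by push_neg; linarith)⟩)]
    rw [Real.sign_of_neg (by linarith : d - y < 0), Real.sign_of_neg (by linarith : c - y < 0),
      abs_of_neg (by linarith : d - y < 0), abs_of_neg (by linarith : c - y < 0), neg_sub, neg_sub]
    ring

lemma aux_lip {s : Set ℝ} (hconv : Convex ℝ s) {u u' : ℝ → ℝ} {C : ℝ}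
    (hd : ∀ x ∈ s, HasDerivWithinAt u (u' x) s x) (hb : ∀ x ∈ s, |u' x| ≤ C)
    {x z : ℝ} (hx : x ∈ s) (hz : z ∈ s) : |u x - u z| ≤ C * |x - z| :=
  hconv.norm_image_sub_le_of_norm_hasDerivWithin_le hd hb hz hx

lemma aux_taylor {s : Set ℝ} (hconv : Convex ℝ s) {u u' u'' : ℝ → ℝ} {C : ℝ}
    (hd : ∀ x ∈ s, HasDerivWithinAt u (u' x) s x)
    (hd2 : ∀ x ∈ s, HasDerivWithinAt u' (u'' x) s x)
    (hb : ∀ x ∈ s, |u'' x| ≤ C)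
    {c d : ℝ} (hcd : c ≤ d) (hsub : Icc c d ⊆ s) :
    ∀ x ∈ Icc c d, |u x - u ((c+d)/2) - u' ((c+d)/2) * (x - (c+d)/2)| ≤ C * (d-c)^2 / 4 := by
  intro x hx
  set m := (c+d)/2 with hm
  have hms : m ∈ Icc c d := ⟨by simp [hm]; linarith, by simp [hm]; linarith⟩
  have habs : ∀ t ∈ Icc c d, |t - m| ≤ (d - c)/2 := by
    intro t ht; rw [abs_le]; constructor <;> [skip; skip] <;> simp [hm] <;> linarith [ht.1, ht.2]
  -- v t = u t - u' m * t
  have hdv : ∀ t ∈ Icc c d, HasDerivWithinAt (fun t => u t - u' m * t) (u' t - u' m) (Icc c d) t := by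
    intro t ht
    exact ((hd t (hsub ht)).mono hsub).sub
      (((hasDerivWithinAt_id t (Icc c d)).const_mul (u' m)).congr_deriv (by ring))
  have hbv : ∀ t ∈ Icc c d, |u' t - u' m| ≤ C * ((d - c)/2) := by
    intro t ht
    calc |u' t - u' m| ≤ C * |t - m| := aux_lip hconv hd2 hb (hsub ht) (hsub hms)
    _ ≤ C * ((d-c)/2) := by
        have hC : 0 ≤ C := le_trans (abs_nonneg _) (hb _ (hsub hms))
        exact mul_le_mul_of_nonneg_left (habs t ht) hC
  have := aux_lip (convex_Icc c d) hdv hbv hx hms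
  calc |u x - u m - u' m * (x - m)| = |(u x - u' m * x) - (u m - u' m * m)| := by ring_nf
  _ ≤ C * ((d-c)/2) * |x - m| := this
  _ ≤ C * ((d-c)/2) * ((d-c)/2) := by
      refine mul_le_mul_of_nonneg_left (habs x hx) ?_
      have hC : 0 ≤ C := le_trans (abs_nonneg _) (hb _ (hsub hms))
      exact mul_nonneg hC (by linarith)
  _ = C * (d-c)^2/4 := by ring

lemma aux_int_lin_zero (c d : ℝ) : ∫ x in c..d, (x - (c+d)/2) = 0 := by
  rw [integral_sub intervalIntegrable_id intervalIntegrable_const, integral_id,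
    intervalIntegral.integral_const]
  simp; ring

lemma aux_D1 {β c d : ℝ} (hβ : -1 < β) (hcd : c < d) (hc : 0 ≤ c) (hcase : 0 < c ∨ 0 ≤ β) :
    |∫ x in c..d, x ^ β * (x - (c+d)/2)| ≤ |d ^ β - c ^ β| * (d - c)^2 / 2 := by
  have hosc : ∀ x ∈ Set.uIoc c d, |x ^ β - c ^ β| ≤ |d ^ β - c ^ β| := by
    intro x hx
    rw [uIoc_of_le hcd.le] at hx
    rcases hcase with h0c | h0β
    · rcases le_or_gt 0 β with hβ' | hβ'
      · rw [abs_of_nonneg (by nlinarith [Real.rpow_le_rpow hc (le_of_lt hx.1) hβ'] : (0:ℝ) ≤ x ^ β - c ^ β),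
          abs_of_nonneg (by nlinarith [Real.rpow_le_rpow hc hcd.le hβ'] : (0:ℝ) ≤ d ^ β - c ^ β)]
        have := Real.rpow_le_rpow (by linarith [hx.1] : (0:ℝ) ≤ x) hx.2 hβ'
        linarith
      · rw [abs_of_nonpos (by nlinarith [Real.rpow_le_rpow_of_nonpos h0c hx.1.le hβ'.le] : x ^ β - c ^ β ≤ 0),
          abs_of_nonpos (by nlinarith [Real.rpow_le_rpow_of_nonpos h0c hcd.le hβ'.le] : d ^ β - c ^ β ≤ 0)]
        have := Real.rpow_le_rpow_of_nonpos (lt_of_lt_of_le h0c hx.1.le) hx.2 hβ'.le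
        linarith
    · rw [abs_of_nonneg (by nlinarith [Real.rpow_le_rpow hc hx.1.le h0β] : (0:ℝ) ≤ x ^ β - c ^ β),
        abs_of_nonneg (by nlinarith [Real.rpow_le_rpow hc hcd.le h0β] : (0:ℝ) ≤ d ^ β - c ^ β)]
      have := Real.rpow_le_rpow (by linarith [hx.1] : (0:ℝ) ≤ x) hx.2 h0β
      linarith
  have key : (∫ x in c..d, x ^ β * (x - (c+d)/2)) = ∫ x in c..d, (x ^ β - c ^ β) * (x - (c+d)/2) := by
    have h2 : (∫ x in c..d, (x ^ β - c ^ β) * (x - (c+d)/2))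
        = (∫ x in c..d, x ^ β * (x - (c+d)/2)) - c ^ β * ∫ x in c..d, (x - (c+d)/2) := by
      rw [← intervalIntegral.integral_const_mul, ← intervalIntegral.integral_sub]
      · congr 1; ext x; ring
      · exact (intervalIntegrable_rpow' hβ).mul_continuousOn (by fun_prop)
      · exact (intervalIntegrable_const.mul_continuousOn (by fun_prop))
    rw [h2, aux_int_lin_zero]; ring
  rw [key]
  have := intervalIntegral.norm_integral_le_of_norm_le_const (a := c) (b := d)
    (C := |d ^ β - c ^ β| * ((d - c)/2)) (f := fun x => (x ^ β - c ^ β) * (x - (c+d)/2)) ?_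
  · rw [Real.norm_eq_abs] at this
    calc |∫ x in c..d, (x ^ β - c ^ β) * (x - (c+d)/2)| ≤ |d ^ β - c ^ β| * ((d-c)/2) * |d - c| := this
      _ = |d ^ β - c ^ β| * (d - c)^2/2 := by
          rw [abs_of_pos (show (0:ℝ) < d - c by linarith)]; ring
  · intro x hx
    rw [Real.norm_eq_abs, abs_mul]
    have h1 := hosc x hx
    have h2 : |x - (c+d)/2| ≤ (d - c)/2 := by
      rw [uIoc_of_le hcd.le] at hx
      rw [abs_le]
      constructor
      · linarith [hx.1]
      · linarith [hx.2]
    exact mul_le_mul h1 h2 (abs_nonneg _) (abs_nonneg _)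

lemma aux_D0 {β d : ℝ} (hβ : -1 < β) (hd : 0 < d) :
    |∫ x in (0:ℝ)..d, x ^ β * (x - (0+d)/2)| ≤ d / 2 * (d ^ (β+1) / (β+1)) := by
  have hint : IntervalIntegrable (fun x => x ^ β * (x - (0+d)/2)) volume 0 d :=
    (intervalIntegrable_rpow' hβ).mul_continuousOn (by fun_prop)
  calc |∫ x in (0:ℝ)..d, x ^ β * (x - (0+d)/2)|
      ≤ ∫ x in (0:ℝ)..d, |x ^ β * (x - (0+d)/2)| :=
        intervalIntegral.abs_integral_le_integral_abs hd.le
    _ ≤ ∫ x in (0:ℝ)..d, x ^ β * (d/2) := by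
        apply intervalIntegral.integral_mono_on hd.le hint.abs
          ((intervalIntegrable_rpow' hβ).mul_continuousOn (by fun_prop))
        intro x hx
        rw [abs_mul, abs_of_nonneg (Real.rpow_nonneg hx.1 β)]
        refine mul_le_mul_of_nonneg_left ?_ (Real.rpow_nonneg hx.1 β)
        rw [abs_le]
        constructor
        · linarith [hx.1]
        · linarith [hx.2]
    _ = d / 2 * (d ^ (β+1) / (β+1)) := by
        rw [intervalIntegral.integral_mul_const, integral_rpow (Or.inl hβ),
          Real.zero_rpow (by linarith : β + 1 ≠ 0)]
        ring

lemma aux_key {β : ℝ} (hβ : -1 < β) {c d : ℝ} (hc : 0 ≤ c) (hcd : c < d)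
    (g2 w : ℝ → ℝ) (P G R1 R2 Mf : ℝ)
    (hg2c : ContinuousOn g2 (Icc c d))
    (hwc : ContinuousOn w (Icc c d))
    (hr : ∀ x ∈ Icc c d, |g2 x * w x - g2 ((c+d)/2) * w ((c+d)/2) - P * (x - (c+d)/2)| ≤ R1)
    (hq : ∀ x ∈ Icc c d, |g2 x - g2 ((c+d)/2) - G * (x - (c+d)/2)| ≤ R2)
    (hw : |w ((c+d)/2)| ≤ Mf) :
    |(∫ x in c..d, x ^ β * g2 x * w x) -
        1 / (d - c) * ((∫ x in c..d, x ^ β) * ((∫ x in c..d, g2 x) * w ((c+d)/2)))| ≤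
      (∫ x in c..d, x ^ β) * (R1 + Mf * R2) + |P| * |∫ x in c..d, x ^ β * (x - (c+d)/2)| := by
  set m := (c+d)/2 with hm
  have hdc : 0 < d - c := by linarith
  set A := ∫ x in c..d, x ^ β with hA
  have hA0 : 0 ≤ A := intervalIntegral.integral_nonneg hcd.le
    (fun x hx => Real.rpow_nonneg (le_trans hc hx.1) β)
  have hrpow : IntervalIntegrable (fun x => x ^ β) volume c d := intervalIntegrable_rpow' hβ
  -- integral of q
  have hq_int : (∫ x in c..d, (g2 x - g2 m - G * (x - m))) = (∫ x in c..d, g2 x) - (d - c) * g2 m := by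
    rw [intervalIntegral.integral_sub (hg2c.intervalIntegrable_of_Icc hcd.le |>.sub
        intervalIntegrable_const) ((intervalIntegrable_id.sub intervalIntegrable_const).const_mul G),
      intervalIntegral.integral_sub (hg2c.intervalIntegrable_of_Icc hcd.le) intervalIntegrable_const,
      intervalIntegral.integral_const_mul]
    have : (∫ x in c..d, (x - m)) = 0 := by
      rw [intervalIntegral.integral_sub intervalIntegrable_id intervalIntegrable_const,
        integral_id, intervalIntegral.integral_const]
      simp only [smul_eq_mul, hm]; ring
    rw [this, intervalIntegral.integral_const]
    simp only [smul_eq_mul, mul_zero, sub_zero]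
  have hqb : |(∫ x in c..d, g2 x) - (d - c) * g2 m| ≤ R2 * (d - c) := by
    rw [← hq_int]
    have := intervalIntegral.norm_integral_le_of_norm_le_const (a := c) (b := d) (C := R2)
      (f := fun x => g2 x - g2 m - G * (x - m)) ?_
    · rw [Real.norm_eq_abs, abs_of_pos hdc] at this; exact this
    · intro x hx
      rw [uIoc_of_le hcd.le] at hx
      exact hq x ⟨hx.1.le, hx.2⟩
  -- decomposition of the main integral
  have huIcc : [[c, d]] = Icc c d := uIcc_of_le hcd.le
  have hr_cont : ContinuousOn (fun x => g2 x * w x - g2 m * w m - P * (x - m)) (Icc c d) :=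
    ((hg2c.mul hwc).sub continuousOn_const).sub
      (continuousOn_const.mul (continuousOn_id.sub continuousOn_const))
  have hint1 : IntervalIntegrable (fun x => x ^ β * (g2 x * w x - g2 m * w m - P * (x - m)))
      volume c d := hrpow.mul_continuousOn (huIcc ▸ hr_cont)
  have hint2 : IntervalIntegrable (fun x => x ^ β * (x - m)) volume c d :=
    hrpow.mul_continuousOn (by fun_prop)
  have hmain : (∫ x in c..d, x ^ β * g2 x * w x) =
      (∫ x in c..d, x ^ β * (g2 x * w x - g2 m * w m - P * (x - m)))
        + (g2 m * w m) * A + P * (∫ x in c..d, x ^ β * (x - m)) := by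
    have : ∀ x, x ^ β * g2 x * w x =
        x ^ β * (g2 x * w x - g2 m * w m - P * (x - m)) + (g2 m * w m) * x ^ β
          + P * (x ^ β * (x - m)) := by intro x; ring
    rw [intervalIntegral.integral_congr (g :=
        fun x => x ^ β * (g2 x * w x - g2 m * w m - P * (x - m)) + (g2 m * w m) * x ^ β
          + P * (x ^ β * (x - m))) (fun x _ => this x)]
    rw [intervalIntegral.integral_add (hint1.add (hrpow.const_mul _)) (hint2.const_mul P),
      intervalIntegral.integral_add hint1 (hrpow.const_mul _),
      intervalIntegral.integral_const_mul, intervalIntegral.integral_const_mul]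
  -- bound on the first piece
  have hb1 : |∫ x in c..d, x ^ β * (g2 x * w x - g2 m * w m - P * (x - m))| ≤ A * R1 := by
    calc |∫ x in c..d, x ^ β * (g2 x * w x - g2 m * w m - P * (x - m))|
        ≤ ∫ x in c..d, |x ^ β * (g2 x * w x - g2 m * w m - P * (x - m))| :=
          intervalIntegral.abs_integral_le_integral_abs hcd.le
      _ ≤ ∫ x in c..d, x ^ β * R1 := by
          apply intervalIntegral.integral_mono_on hcd.le hint1.abs
            (hrpow.mul_continuousOn (by fun_prop))
          intro x hx
          rw [abs_mul, abs_of_nonneg (Real.rpow_nonneg (le_trans hc hx.1) β)]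
          exact mul_le_mul_of_nonneg_left (hr x hx) (Real.rpow_nonneg (le_trans hc hx.1) β)
      _ = A * R1 := by rw [intervalIntegral.integral_mul_const]
  -- assemble
  have key : (∫ x in c..d, x ^ β * g2 x * w x) - 1 / (d - c) * (A * ((∫ x in c..d, g2 x) * w m)) =
      (∫ x in c..d, x ^ β * (g2 x * w x - g2 m * w m - P * (x - m)))
        + P * (∫ x in c..d, x ^ β * (x - m))
        - (A * w m / (d - c)) * ((∫ x in c..d, g2 x) - (d - c) * g2 m) := by
    rw [hmain]; field_simp; ring
  rw [key]
  have hMf0 : 0 ≤ Mf := le_trans (abs_nonneg _) hw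
  calc |(∫ x in c..d, x ^ β * (g2 x * w x - g2 m * w m - P * (x - m)))
        + P * (∫ x in c..d, x ^ β * (x - m))
        - (A * w m / (d - c)) * ((∫ x in c..d, g2 x) - (d - c) * g2 m)|
      ≤ |∫ x in c..d, x ^ β * (g2 x * w x - g2 m * w m - P * (x - m))|
        + |P * (∫ x in c..d, x ^ β * (x - m))|
        + |(A * w m / (d - c)) * ((∫ x in c..d, g2 x) - (d - c) * g2 m)| := by
        apply (abs_sub _ _).trans; gcongr; exact abs_add_le _ _
    _ ≤ A * R1 + |P| * |∫ x in c..d, x ^ β * (x - m)| + (A * Mf / (d - c)) * (R2 * (d - c)) := by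
        refine add_le_add (add_le_add hb1 (abs_mul _ _).le) ?_
        rw [abs_mul]
        apply mul_le_mul _ hqb (abs_nonneg _) (by positivity)
        rw [abs_div, abs_of_pos hdc, abs_mul, abs_of_nonneg hA0]
        gcongr
    _ = A * (R1 + Mf * R2) + |P| * |∫ x in c..d, x ^ β * (x - m)| := by field_simp; ring

noncomputable def quadError (a b β γ y : ℝ) (f : ℝ → ℝ) (N : ℕ) : ℝ :=
  (∫ x in a..b, x ^ β * |x - y| ^ γ * f x) -
    (1 / ((b - a) / N)) *
      ∑ n ∈ Finset.range N,
        ((a + ((n : ℝ) + 1) * ((b - a) / N)) ^ (β + 1) -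
            (a + (n : ℝ) * ((b - a) / N)) ^ (β + 1)) / (β + 1) *
        ((Real.sign (a + ((n : ℝ) + 1) * ((b - a) / N) - y) *
              |a + ((n : ℝ) + 1) * ((b - a) / N) - y| ^ (γ + 1) -
            Real.sign (a + (n : ℝ) * ((b - a) / N) - y) *
              |a + (n : ℝ) * ((b - a) / N) - y| ^ (γ + 1)) / (γ + 1)) *
        f (a + ((n : ℝ) + 1 / 2) * ((b - a) / N))

lemma aux_main (a b β γ y : ℝ) (ha : 0 ≤ a) (hab : a < b) (hβ : -1 < β) (hγ : γ ≠ -1)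
    (hy : y < a ∨ b < y) (f : ℝ → ℝ) (hf : ContDiffOn ℝ 2 f (Set.Icc a b))
    (M : ℝ) (φ' g2' φ'' g2'' : ℝ → ℝ)
    (hdφ : ∀ x ∈ Icc a b, HasDerivWithinAt (fun x => |x - y| ^ γ * f x) (φ' x) (Icc a b) x)
    (hdφ' : ∀ x ∈ Icc a b, HasDerivWithinAt φ' (φ'' x) (Icc a b) x)
    (hdg2 : ∀ x ∈ Icc a b, HasDerivWithinAt (fun x => |x - y| ^ γ) (g2' x) (Icc a b) x)
    (hdg2' : ∀ x ∈ Icc a b, HasDerivWithinAt g2' (g2'' x) (Icc a b) x)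
    (hMf : ∀ x ∈ Icc a b, |f x| ≤ M)
    (hMφ'' : ∀ x ∈ Icc a b, |φ'' x| ≤ M) (hMg'' : ∀ x ∈ Icc a b, |g2'' x| ≤ M)
    (N : ℕ) (hN : 1 ≤ N) (X : ℕ → ℝ) (hX : ∀ n, X n = a + n * ((b - a) / N)) :
    |quadError a b β γ y f N| ≤
      (b ^ (β+1) - a ^ (β+1)) / (β+1) * ((M + M*M) * ((b-a)/N)^2 / 4)
      + ∑ n ∈ Finset.range N, |φ' ((X n + X (n+1))/2)| *
          |∫ x in X n..X (n+1), x ^ β * (x - (X n + X (n+1))/2)| := by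
  have hNR : (0:ℝ) < N := by exact_mod_cast Nat.lt_of_lt_of_le Nat.zero_lt_one hN
  set H := (b - a) / N with hH
  have hh : 0 < H := by rw [hH]; exact div_pos (by linarith) hNR
  have hXd : ∀ n : ℕ, X (n+1) - X n = H := by
    intro n; rw [hX, hX]; push_cast; ring
  have hXlt : ∀ n : ℕ, X n < X (n+1) := by
    intro n; have := hXd n; linarith
  have hX0 : X 0 = a := by rw [hX]; simp
  have hXN : X N = b := by
    rw [hX, hH, mul_div_cancel₀ _ (ne_of_gt hNR)]; ring
  have hXmem : ∀ n : ℕ, n ≤ N → X n ∈ Icc a b := by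
    intro n hn
    rw [hX]
    constructor
    · have : 0 ≤ (n:ℝ) * H := mul_nonneg (Nat.cast_nonneg n) hh.le
      linarith
    · have h1 : (n:ℝ) ≤ N := by exact_mod_cast hn
      have h3 : (n:ℝ) * H ≤ N * H := mul_le_mul_of_nonneg_right h1 hh.le
      have h2 : (N:ℝ) * H = b - a := by rw [hH]; field_simp
      linarith
  have hsub : ∀ n : ℕ, n < N → Icc (X n) (X (n+1)) ⊆ Icc a b := by
    intro n hn
    exact Icc_subset_Icc (hXmem n hn.le).1 (hXmem (n+1) hn).2
  have hXpos : ∀ n : ℕ, 0 ≤ X n := by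
    intro n; rw [hX]
    have := mul_nonneg (Nat.cast_nonneg (α := ℝ) n) hh.le
    linarith
  -- continuity
  have hneq : ∀ x ∈ Icc a b, |x - y| ≠ 0 := by
    intro x hx h0
    have := abs_eq_zero.mp h0
    have hxy : x = y := by linarith [sub_eq_zero.mp this]
    rcases hy with h | h
    · exact absurd hx.1 (by rw [hxy]; linarith)
    · exact absurd hx.2 (by rw [hxy]; linarith)
  have hgcont : ContinuousOn (fun x : ℝ => |x - y| ^ γ) (Icc a b) := by
    apply ContinuousOn.rpow_const (by fun_prop)
    intro x hx; exact Or.inl (hneq x hx)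
  have hfc : ContinuousOn f (Icc a b) := hf.continuousOn
  -- integrability on subintervals
  have hint : ∀ k : ℕ, k < N →
      IntervalIntegrable (fun x => x ^ β * |x - y| ^ γ * f x) volume (X k) (X (k+1)) := by
    intro k hk
    have huI : [[X k, X (k+1)]] = Icc (X k) (X (k+1)) := uIcc_of_le (hXlt k).le
    exact ((intervalIntegrable_rpow' hβ).mul_continuousOn
      (huI ▸ (hgcont.mono (hsub k hk)))).mul_continuousOn (huI ▸ (hfc.mono (hsub k hk)))
  have hA : ∀ n : ℕ, (∫ x in X n..X (n+1), x ^ β)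
      = ((X (n+1)) ^ (β+1) - (X n) ^ (β+1)) / (β+1) := fun n => integral_rpow (Or.inl hβ)
  have hB : ∀ n : ℕ, n < N → (∫ x in X n..X (n+1), |x - y| ^ γ)
      = (Real.sign (X (n+1) - y) * |X (n+1) - y| ^ (γ+1)
          - Real.sign (X n - y) * |X n - y| ^ (γ+1)) / (γ+1) := by
    intro n hn
    apply aux_g2_int hγ (hXlt n).le
    rcases hy with h | h
    · left; calc y < a := h
        _ ≤ X n := (hXmem n hn.le).1
    · right; calc X (n+1) ≤ b := (hXmem (n+1) hn).2
        _ < y := h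
  -- rewrite quadError as a sum
  have hquad : quadError a b β γ y f N = ∑ n ∈ Finset.range N,
      ((∫ x in X n..X (n+1), x ^ β * |x - y| ^ γ * f x)
        - 1 / H * ((∫ x in X n..X (n+1), x ^ β)
            * ((∫ x in X n..X (n+1), |x - y| ^ γ) * f ((X n + X (n+1))/2)))) := by
    have hsplit := (intervalIntegral.sum_integral_adjacent_intervals
      (f := fun x => x ^ β * |x - y| ^ γ * f x) (μ := volume) hint).symm
    rw [hX0, hXN] at hsplit
    rw [quadError, hsplit, Finset.sum_sub_distrib, ← hH]
    congr 1
    rw [Finset.mul_sum]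
    apply Finset.sum_congr rfl
    intro n hn
    have hn' := Finset.mem_range.mp hn
    have hmid : (X n + X (n+1))/2 = a + ((n:ℝ) + 1/2) * H := by
      rw [hX n, hX (n+1)]; push_cast; ring
    rw [hA n, hB n hn', hmid, hX n, hX (n+1)]
    push_cast
    ring
  rw [hquad]
  have step1 := Finset.abs_sum_le_sum_abs (fun n =>
    (∫ x in X n..X (n+1), x ^ β * |x - y| ^ γ * f x)
      - 1 / H * ((∫ x in X n..X (n+1), x ^ β)
          * ((∫ x in X n..X (n+1), |x - y| ^ γ) * f ((X n + X (n+1))/2)))) (Finset.range N)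
  refine le_trans step1 ?_
  have step2 : ∀ n ∈ Finset.range N,
      |(∫ x in X n..X (n+1), x ^ β * |x - y| ^ γ * f x)
        - 1 / H * ((∫ x in X n..X (n+1), x ^ β)
            * ((∫ x in X n..X (n+1), |x - y| ^ γ) * f ((X n + X (n+1))/2)))| ≤
      (∫ x in X n..X (n+1), x ^ β) * (M * H^2/4 + M * (M * H^2/4))
        + |φ' ((X n + X (n+1))/2)| * |∫ x in X n..X (n+1), x ^ β * (x - (X n + X (n+1))/2)| := by
    intro n hn
    have hn' := Finset.mem_range.mp hn
    have hczd := hXlt n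
    have h0c := hXpos n
    have hIsub := hsub n hn'
    have hg2c : ContinuousOn (fun x : ℝ => |x - y| ^ γ) (Icc (X n) (X (n+1))) :=
      hgcont.mono hIsub
    have hwc : ContinuousOn f (Icc (X n) (X (n+1))) := hfc.mono hIsub
    have hmmem : (X n + X (n+1))/2 ∈ Icc a b := by
      apply hIsub
      constructor
      · linarith
      · linarith
    have hr := aux_taylor (convex_Icc a b) hdφ hdφ' hMφ'' hczd.le hIsub
    have hq := aux_taylor (convex_Icc a b) hdg2 hdg2' hMg'' hczd.le hIsub
    rw [hXd n] at hr hq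
    have hkey := aux_key hβ h0c hczd (fun x => |x - y| ^ γ) f
      (φ' ((X n + X (n+1))/2)) (g2' ((X n + X (n+1))/2)) (M * H^2/4) (M * H^2/4) M
      hg2c hwc hr hq (hMf _ hmmem)
    rw [hXd n] at hkey
    exact hkey
  refine le_trans (Finset.sum_le_sum step2) ?_
  rw [Finset.sum_add_distrib, ← Finset.sum_mul]
  have hSA : ∑ n ∈ Finset.range N, (∫ x in X n..X (n+1), x ^ β)
      = (b ^ (β+1) - a ^ (β+1)) / (β+1) := by
    rw [Finset.sum_congr rfl (fun n _ => hA n), ← Finset.sum_div,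
      Finset.sum_range_sub (fun n => (X n) ^ (β+1)), hX0, hXN]
  rw [hSA]
  apply add_le_add_left
  apply le_of_eq
  ring

section
variable {β : ℝ}

lemma aux_grid (a b : ℝ) (hab : a < b) (N : ℕ) (hN : 1 ≤ N)
    (X : ℕ → ℝ) (hX : ∀ n, X n = a + n * ((b - a)/N)) :
    (0 < (b-a)/N) ∧ (∀ n : ℕ, X (n+1) - X n = (b-a)/N) ∧ X 0 = a ∧ X N = b ∧
      (∀ n : ℕ, n ≤ N → X n ∈ Icc a b) := by
  have hNR : (0:ℝ) < N := by exact_mod_cast Nat.lt_of_lt_of_le Nat.zero_lt_one hN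
  have hh : 0 < (b - a)/N := div_pos (by linarith) hNR
  refine ⟨hh, ?_, ?_, ?_, ?_⟩
  · intro n; rw [hX, hX]; push_cast; ring
  · rw [hX]; simp
  · rw [hX, mul_div_cancel₀ _ (ne_of_gt hNR)]; ring
  · intro n hn
    rw [hX]
    constructor
    · have : 0 ≤ (n:ℝ) * ((b-a)/N) := mul_nonneg (Nat.cast_nonneg n) hh.le
      linarith
    · have h1 : (n:ℝ) ≤ N := by exact_mod_cast hn
      have h3 : (n:ℝ) * ((b-a)/N) ≤ N * ((b-a)/N) := mul_le_mul_of_nonneg_right h1 hh.le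
      have h2 : (N:ℝ) * ((b-a)/N) = b - a := by field_simp
      linarith

lemma aux_sumA (a b β : ℝ) (ha : 0 ≤ a) (hab : a < b) (hβ : -1 < β)
    (M : ℝ) (hM : 0 ≤ M) (φ' : ℝ → ℝ) (hMφ' : ∀ x ∈ Icc a b, |φ' x| ≤ M)
    (hcase : 0 < a ∨ 0 ≤ β)
    (N : ℕ) (hN : 1 ≤ N) (X : ℕ → ℝ) (hX : ∀ n, X n = a + n * ((b - a)/N)) :
    ∑ n ∈ Finset.range N, |φ' ((X n + X (n+1))/2)| *
        |∫ x in X n..X (n+1), x ^ β * (x - (X n + X (n+1))/2)|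
      ≤ M * |b ^ β - a ^ β| / 2 * ((b-a)/N)^2 := by
  obtain ⟨hh, hXd, hX0, hXN, hXmem⟩ := aux_grid a b hab N hN X hX
  have hXpos : ∀ n : ℕ, 0 ≤ X n := by
    intro n; rw [hX]
    have := mul_nonneg (Nat.cast_nonneg (α := ℝ) n) hh.le
    linarith
  have hXlt : ∀ n : ℕ, X n < X (n+1) := by intro n; have := hXd n; linarith
  have hper : ∀ n ∈ Finset.range N, |φ' ((X n + X (n+1))/2)| *
      |∫ x in X n..X (n+1), x ^ β * (x - (X n + X (n+1))/2)|
      ≤ M * ((b-a)/N)^2/2 * |X (n+1) ^ β - X n ^ β| := by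
    intro n hn
    have hn' := Finset.mem_range.mp hn
    have hmmem : (X n + X (n+1))/2 ∈ Icc a b := by
      have h1 := (hXmem n hn'.le).1
      have h2 := (hXmem (n+1) hn').2
      have := hXlt n
      constructor <;> [linarith; linarith]
    have hD := aux_D1 hβ (hXlt n) (hXpos n)
      (by rcases hcase with h | h
          · left; have := (hXmem n hn'.le).1; linarith
          · right; exact h)
    rw [hXd n] at hD
    calc |φ' ((X n + X (n+1))/2)| * |∫ x in X n..X (n+1), x ^ β * (x - (X n + X (n+1))/2)|
        ≤ M * (|X (n+1) ^ β - X n ^ β| * ((b-a)/N)^2/2) :=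
          mul_le_mul (hMφ' _ hmmem) hD (abs_nonneg _) hM
      _ = M * ((b-a)/N)^2/2 * |X (n+1) ^ β - X n ^ β| := by ring
  refine le_trans (Finset.sum_le_sum hper) ?_
  rw [← Finset.mul_sum]
  have hsum : ∑ n ∈ Finset.range N, |X (n+1) ^ β - X n ^ β| = |b ^ β - a ^ β| := by
    rcases hcase with h0a | h0β
    · rcases le_or_gt 0 β with h0β | hβ0
      · have : ∀ n ∈ Finset.range N, |X (n+1) ^ β - X n ^ β| = X (n+1) ^ β - X n ^ β := by
          intro n _
          exact abs_of_nonneg (by nlinarith [Real.rpow_le_rpow (hXpos n) (hXlt n).le h0β])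
        rw [Finset.sum_congr rfl this, Finset.sum_range_sub (fun n => X n ^ β), hX0, hXN,
          abs_of_nonneg (by nlinarith [Real.rpow_le_rpow ha hab.le h0β])]
      · have : ∀ n ∈ Finset.range N, |X (n+1) ^ β - X n ^ β| = X n ^ β - X (n+1) ^ β := by
          intro n hn
          have hn' := Finset.mem_range.mp hn
          have h1 : 0 < X n := lt_of_lt_of_le h0a (hXmem n hn'.le).1
          rw [abs_sub_comm]
          exact abs_of_nonneg (by nlinarith [Real.rpow_le_rpow_of_nonpos h1 (hXlt n).le hβ0.le])
        rw [Finset.sum_congr rfl this, Finset.sum_range_sub' (fun n => X n ^ β), hX0, hXN,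
          abs_of_nonpos (by nlinarith [Real.rpow_le_rpow_of_nonpos h0a hab.le hβ0.le])]
        ring
    · have : ∀ n ∈ Finset.range N, |X (n+1) ^ β - X n ^ β| = X (n+1) ^ β - X n ^ β := by
        intro n _
        exact abs_of_nonneg (by nlinarith [Real.rpow_le_rpow (hXpos n) (hXlt n).le h0β])
      rw [Finset.sum_congr rfl this, Finset.sum_range_sub (fun n => X n ^ β), hX0, hXN,
        abs_of_nonneg (by nlinarith [Real.rpow_le_rpow ha hab.le h0β])]
  rw [hsum]
  apply le_of_eq; ring

end

lemma aux_sumB (b β : ℝ) (hb : 0 < b) (hβ : -1 < β) (hβ0 : β < 0)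
    (M : ℝ) (hM : 0 ≤ M) (φ' : ℝ → ℝ) (hMφ' : ∀ x ∈ Icc 0 b, |φ' x| ≤ M)
    (N : ℕ) (hN : 1 ≤ N) (X : ℕ → ℝ) (hX : ∀ n, X n = 0 + n * ((b - 0)/N)) :
    ∑ n ∈ Finset.range N, |φ' ((X n + X (n+1))/2)| *
        |∫ x in X n..X (n+1), x ^ β * (x - (X n + X (n+1))/2)|
      ≤ M * (1/(2*(β+1)) + 1/2) * ((b-0)/N) ^ (2+β) := by
  obtain ⟨hh, hXd, hX0, hXN, hXmem⟩ := aux_grid 0 b hb N hN X hX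
  set H := (b - 0)/N with hH
  have hXpos : ∀ n : ℕ, 0 ≤ X n := by
    intro n; rw [hX]
    have := mul_nonneg (Nat.cast_nonneg (α := ℝ) n) hh.le
    linarith
  have hXlt : ∀ n : ℕ, X n < X (n+1) := by intro n; have := hXd n; linarith
  have hX1 : X 1 = H := by rw [hX]; push_cast; ring
  have hHb : H ≤ b := by
    rw [hH]
    calc (b - 0)/(N:ℝ) ≤ (b - 0)/1 := by
          apply div_le_div_of_nonneg_left (by linarith) one_pos
          exact_mod_cast hN
      _ = b := by ring
  obtain ⟨N', rfl⟩ : ∃ N', N = N' + 1 := ⟨N - 1, (Nat.succ_pred_eq_of_pos hN).symm⟩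
  rw [Finset.sum_range_succ']
  -- the n = 0 term
  have hterm0 : |φ' ((X 0 + X 1)/2)| * |∫ x in (X 0)..(X 1), x ^ β * (x - (X 0 + X 1)/2)|
      ≤ M * (H/2 * (H ^ (β+1)/(β+1))) := by
    rw [hX0, hX1]
    refine mul_le_mul (hMφ' _ ?_) (aux_D0 hβ hh) (abs_nonneg _) hM
    constructor
    · linarith
    · linarith [hHb]
  -- the shifted terms
  have hterm : ∀ n ∈ Finset.range N', |φ' ((X (n+1) + X (n+2))/2)| *
      |∫ x in X (n+1)..X (n+2), x ^ β * (x - (X (n+1) + X (n+2))/2)|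
      ≤ M * H^2/2 * (X (n+1) ^ β - X (n+2) ^ β) := by
    intro n hn
    have hn' := Finset.mem_range.mp hn
    have hn2 : n + 2 ≤ N' + 1 := by omega
    have hpos1 : 0 < X (n+1) := by
      rw [hX]; push_cast
      have : 0 < ((n:ℝ) + 1) * H := by positivity
      linarith
    have hmmem : (X (n+1) + X (n+2))/2 ∈ Icc 0 b := by
      have h1 := (hXmem (n+1) (by omega)).1
      have h2 := (hXmem (n+2) hn2).2
      have := hXlt (n+1)
      constructor <;> [linarith; linarith]
    have hD := aux_D1 hβ (hXlt (n+1)) (hXpos (n+1)) (Or.inl hpos1)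
    rw [hXd (n+1)] at hD
    have habs : |X (n+2) ^ β - X (n+1) ^ β| = X (n+1) ^ β - X (n+2) ^ β := by
      rw [abs_sub_comm]
      exact abs_of_nonneg (by
        nlinarith [Real.rpow_le_rpow_of_nonpos hpos1 (hXlt (n+1)).le hβ0.le])
    rw [habs] at hD
    calc |φ' ((X (n+1) + X (n+2))/2)| * |∫ x in X (n+1)..X (n+2), x ^ β * (x - (X (n+1) + X (n+2))/2)|
        ≤ M * ((X (n+1) ^ β - X (n+2) ^ β) * H^2/2) :=
          mul_le_mul (hMφ' _ hmmem) hD (abs_nonneg _) hM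
      _ = M * H^2/2 * (X (n+1) ^ β - X (n+2) ^ β) := by ring
  have hsum2 : ∑ n ∈ Finset.range N', (X (n+1) ^ β - X (n+2) ^ β) = X 1 ^ β - X (N'+1) ^ β := by
    exact Finset.sum_range_sub' (fun n => X (n+1) ^ β) N'
  have hstep : ∑ n ∈ Finset.range N', |φ' ((X (n+1) + X (n+2))/2)| *
      |∫ x in X (n+1)..X (n+2), x ^ β * (x - (X (n+1) + X (n+2))/2)|
      ≤ M * H^2/2 * H ^ β := by
    refine le_trans (Finset.sum_le_sum hterm) ?_
    rw [← Finset.mul_sum, hsum2, hX1]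
    have h1 : 0 ≤ X (N'+1) ^ β := Real.rpow_nonneg (hXpos _) β
    have h2 : 0 ≤ M * H^2/2 := by positivity
    nlinarith
  -- combine
  have e1 : H ^ (β+1) = H ^ β * H := Real.rpow_add_one hh.ne' β
  have e2 : H ^ (2+β) = H ^ β * H * H := by
    rw [show (2:ℝ)+β = (β+1)+1 by ring, Real.rpow_add_one hh.ne', e1]
  have hb1 : 0 < β + 1 := by linarith
  simp only [show (0:ℕ)+1 = 1 from rfl]
  calc (∑ n ∈ Finset.range N', |φ' ((X (n+1) + X (n+1+1))/2)| *
          |∫ x in X (n+1)..X (n+1+1), x ^ β * (x - (X (n+1) + X (n+1+1))/2)|)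
        + |φ' ((X 0 + X 1)/2)| * |∫ x in (X 0)..(X 1), x ^ β * (x - (X 0 + X 1)/2)|
      ≤ M * H^2/2 * H ^ β + M * (H/2 * (H ^ (β+1)/(β+1))) := by
        exact add_le_add (by exact_mod_cast hstep) hterm0
    _ = M * (1/(2*(β+1)) + 1/2) * H ^ (2+β) := by
        rw [e1, e2]
        field_simp
        ring

lemma aux_step {β u v : ℝ} (hβ : -1 < β) (hβ0 : β < 0) (hu : 0 < u) (huv : u < v) :
    u * (u ^ β - v ^ β) ≤ (u ^ (β+1) - v ^ (β+1)) + (v ^ (β+1) - u ^ (β+1))/(β+1) := by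
  have hv : 0 < v := lt_trans hu huv
  have e1 : u * u ^ β = u ^ (β+1) := by
    rw [Real.rpow_add_one hu.ne' β]; ring
  have e2 : u * v ^ β = v ^ (β+1) - (v - u) * v ^ β := by
    rw [Real.rpow_add_one hv.ne' β]; ring
  have hmono : (v - u) * v ^ β ≤ (v ^ (β+1) - u ^ (β+1))/(β+1) := by
    have hint : (∫ x in u..v, v ^ β) ≤ ∫ x in u..v, x ^ β := by
      apply intervalIntegral.integral_mono_on huv.le intervalIntegrable_const
        (intervalIntegrable_rpow' hβ)
      intro x hx
      exact Real.rpow_le_rpow_of_nonpos (lt_of_lt_of_le hu hx.1) hx.2 hβ0.le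
    rw [intervalIntegral.integral_const, integral_rpow (Or.inl hβ), smul_eq_mul] at hint
    linarith
  nlinarith [e1, e2, hmono]

lemma aux_sumC (b β : ℝ) (hb : 0 < b) (hβ : -1 < β) (hβ0 : β < 0)
    (M : ℝ) (hM : 0 ≤ M) (φ' φ'' : ℝ → ℝ)
    (hdφ' : ∀ x ∈ Icc 0 b, HasDerivWithinAt φ' (φ'' x) (Icc 0 b) x)
    (hMφ'' : ∀ x ∈ Icc 0 b, |φ'' x| ≤ M)
    (hd0 : φ' 0 = 0)
    (N : ℕ) (hN : 1 ≤ N) (X : ℕ → ℝ) (hX : ∀ n, X n = 0 + n * ((b - 0)/N)) :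
    ∑ n ∈ Finset.range N, |φ' ((X n + X (n+1))/2)| *
        |∫ x in X n..X (n+1), x ^ β * (x - (X n + X (n+1))/2)|
      ≤ (M * b ^ (β+1) / (4*(β+1)) + M * b ^ (β+1) * (1 + 1/(β+1))) * ((b-0)/N)^2 := by
  obtain ⟨hh, hXd, hX0, hXN, hXmem⟩ := aux_grid 0 b hb N hN X hX
  set H := (b - 0)/N with hH
  have hXpos : ∀ n : ℕ, 0 ≤ X n := by
    intro n; rw [hX]
    have := mul_nonneg (Nat.cast_nonneg (α := ℝ) n) hh.le
    linarith
  have hXlt : ∀ n : ℕ, X n < X (n+1) := by intro n; have := hXd n; linarith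
  have hX1 : X 1 = H := by rw [hX]; push_cast; ring
  have hHb : H ≤ b := by
    rw [hH]
    calc (b - 0)/(N:ℝ) ≤ (b - 0)/1 := by
          apply div_le_div_of_nonneg_left (by linarith) one_pos
          exact_mod_cast hN
      _ = b := by ring
  have hb1 : (0:ℝ) < β + 1 := by linarith
  -- |φ' x| ≤ M * x on Icc 0 b
  have hlin : ∀ x ∈ Icc 0 b, |φ' x| ≤ M * x := by
    intro x hx
    have := aux_lip (convex_Icc 0 b) hdφ' hMφ'' hx (⟨le_refl 0, hb.le⟩ : (0:ℝ) ∈ Icc 0 b)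
    rw [hd0, sub_zero, sub_zero, abs_of_nonneg hx.1] at this
    exact this
  obtain ⟨N', rfl⟩ : ∃ N', N = N' + 1 := ⟨N - 1, (Nat.succ_pred_eq_of_pos hN).symm⟩
  rw [Finset.sum_range_succ']
  -- n = 0 term
  have hmid0 : (X 0 + X 1)/2 = H/2 := by rw [hX0, hX1]; ring
  have hmid0mem : (X 0 + X 1)/2 ∈ Icc 0 b := by
    rw [hmid0]; constructor
    · linarith
    · linarith
  have hterm0 : |φ' ((X 0 + X 1)/2)| * |∫ x in (X 0)..(X 1), x ^ β * (x - (X 0 + X 1)/2)|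
      ≤ M * b ^ (β+1) / (4*(β+1)) * H^2 := by
    rw [hX0, hX1]
    have h2 := aux_D0 (d := H) hβ hh
    have h1 : |φ' ((0 + H)/2)| ≤ M * ((0 + H)/2) := by
      apply hlin
      constructor
      · linarith
      · linarith
    calc |φ' ((0 + H)/2)| * |∫ x in (0:ℝ)..H, x ^ β * (x - (0 + H)/2)|
        ≤ (M * ((0 + H)/2)) * (H/2 * (H ^ (β+1)/(β+1))) :=
          mul_le_mul h1 h2 (abs_nonneg _) (mul_nonneg hM (by linarith))
        _ = (M * (H ^ (β+1) * H^2)) / (4*(β+1)) := by field_simp; ring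
        _ ≤ (M * b ^ (β+1) * H^2) / (4*(β+1)) := by
          have h3 : H ^ (β+1) ≤ b ^ (β+1) := Real.rpow_le_rpow hh.le hHb hb1.le
          have h4 : (0:ℝ) ≤ H^2 := sq_nonneg H
          apply (div_le_div_iff_of_pos_right (by linarith)).mpr
          have h5 := mul_le_mul_of_nonneg_right (mul_le_mul_of_nonneg_left h3 hM) h4
          nlinarith [h5]
        _ = M * b ^ (β+1) / (4*(β+1)) * H^2 := by ring
  -- shifted terms
  have hterm : ∀ n ∈ Finset.range N', |φ' ((X (n+1) + X (n+2))/2)| *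
      |∫ x in X (n+1)..X (n+2), x ^ β * (x - (X (n+1) + X (n+2))/2)|
      ≤ M * H^2 * ((X (n+1) ^ (β+1) - X (n+2) ^ (β+1))
          + (X (n+2) ^ (β+1) - X (n+1) ^ (β+1))/(β+1)) := by
    intro n hn
    have hn' := Finset.mem_range.mp hn
    have hn2 : n + 2 ≤ N' + 1 := by omega
    have hpos1 : 0 < X (n+1) := by
      rw [hX]; push_cast
      have : 0 < ((n:ℝ) + 1) * H := by positivity
      linarith
    have hmmem : (X (n+1) + X (n+2))/2 ∈ Icc 0 b := by
      have h1 := (hXmem (n+1) (by omega)).1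
      have h2 := (hXmem (n+2) hn2).2
      have := hXlt (n+1)
      constructor <;> [linarith; linarith]
    have hD := aux_D1 hβ (hXlt (n+1)) (hXpos (n+1)) (Or.inl hpos1)
    rw [hXd (n+1)] at hD
    have habs : |X (n+2) ^ β - X (n+1) ^ β| = X (n+1) ^ β - X (n+2) ^ β := by
      rw [abs_sub_comm]
      exact abs_of_nonneg (by
        nlinarith [Real.rpow_le_rpow_of_nonpos hpos1 (hXlt (n+1)).le hβ0.le])
    rw [habs] at hD
    have hmb : (X (n+1) + X (n+2))/2 ≤ 2 * X (n+1) := by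
      have h1 : X (n+2) ≤ 2 * X (n+1) := by
        rw [hX, hX]; push_cast
        have : 0 ≤ ((n:ℝ)) * H := mul_nonneg (Nat.cast_nonneg n) hh.le
        linarith
      have := hXlt (n+1)
      linarith
    have hosc : 0 ≤ X (n+1) ^ β - X (n+2) ^ β := by
      nlinarith [Real.rpow_le_rpow_of_nonpos hpos1 (hXlt (n+1)).le hβ0.le]
    calc |φ' ((X (n+1) + X (n+2))/2)| *
          |∫ x in X (n+1)..X (n+2), x ^ β * (x - (X (n+1) + X (n+2))/2)|
        ≤ (M * ((X (n+1) + X (n+2))/2)) * ((X (n+1) ^ β - X (n+2) ^ β) * H^2/2) :=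
          mul_le_mul (hlin _ hmmem) hD (abs_nonneg _)
            (mul_nonneg hM (by linarith [hXpos (n+1), hXpos (n+2)]))
      _ ≤ (M * (2 * X (n+1))) * ((X (n+1) ^ β - X (n+2) ^ β) * H^2/2) := by
          apply mul_le_mul_of_nonneg_right (mul_le_mul_of_nonneg_left hmb hM)
          positivity
      _ = M * H^2 * (X (n+1) * (X (n+1) ^ β - X (n+2) ^ β)) := by ring
      _ ≤ M * H^2 * ((X (n+1) ^ (β+1) - X (n+2) ^ (β+1))
            + (X (n+2) ^ (β+1) - X (n+1) ^ (β+1))/(β+1)) := by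
          apply mul_le_mul_of_nonneg_left (aux_step hβ hβ0 hpos1 (hXlt (n+1))) (by positivity)
  -- sum the telescopes
  have hsum1 : ∑ n ∈ Finset.range N', (X (n+1) ^ (β+1) - X (n+2) ^ (β+1))
      = X 1 ^ (β+1) - X (N'+1) ^ (β+1) :=
    Finset.sum_range_sub' (fun n => X (n+1) ^ (β+1)) N'
  have hsum2 : ∑ n ∈ Finset.range N', (X (n+2) ^ (β+1) - X (n+1) ^ (β+1))
      = X (N'+1) ^ (β+1) - X 1 ^ (β+1) :=
    Finset.sum_range_sub (fun n => X (n+1) ^ (β+1)) N'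
  have hstep : ∑ n ∈ Finset.range N', |φ' ((X (n+1) + X (n+2))/2)| *
      |∫ x in X (n+1)..X (n+2), x ^ β * (x - (X (n+1) + X (n+2))/2)|
      ≤ M * H^2 * (b ^ (β+1) + b ^ (β+1)/(β+1)) := by
    refine le_trans (Finset.sum_le_sum hterm) ?_
    rw [← Finset.mul_sum, Finset.sum_add_distrib, ← Finset.sum_div, hsum1, hsum2, hX1, hXN]
    have h1 : H ^ (β+1) ≤ b ^ (β+1) := Real.rpow_le_rpow hh.le hHb hb1.le
    have h2 : 0 ≤ H ^ (β+1) := Real.rpow_nonneg hh.le _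
    have h3 : 0 ≤ b ^ (β+1) := Real.rpow_nonneg hb.le _
    have h4 : 0 ≤ M * H^2 := by positivity
    have h5 : (b ^ (β+1) - H ^ (β+1))/(β+1) ≤ b ^ (β+1)/(β+1) := by
      apply (div_le_div_iff_of_pos_right hb1).mpr
      linarith
    nlinarith [h5]
  simp only [show (0:ℕ)+1 = 1 from rfl]
  calc (∑ n ∈ Finset.range N', |φ' ((X (n+1) + X (n+1+1))/2)| *
          |∫ x in X (n+1)..X (n+1+1), x ^ β * (x - (X (n+1) + X (n+1+1))/2)|)
        + |φ' ((X 0 + X 1)/2)| * |∫ x in (X 0)..(X 1), x ^ β * (x - (X 0 + X 1)/2)|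
      ≤ M * H^2 * (b ^ (β+1) + b ^ (β+1)/(β+1)) + M * b ^ (β+1) / (4*(β+1)) * H^2 := by
        exact add_le_add (by exact_mod_cast hstep) hterm0
    _ = (M * b ^ (β+1) / (4*(β+1)) + M * b ^ (β+1) * (1 + 1/(β+1))) * H^2 := by
        field_simp
        ring

set_option maxHeartbeats 1000000 in
theorem stmt15 (a b β γ y : ℝ) (ha : 0 ≤ a) (hab : a < b) (hβ : -1 < β) (hγ : γ ≠ -1)
    (hy : y ∉ Set.Icc a b) (f : ℝ → ℝ) (hf : ContDiffOn ℝ 2 f (Set.Icc a b)) :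
    ∃ K : ℝ, 0 < K ∧ ∀ N : ℕ, 1 ≤ N →
      ((0 < a ∨ (a = 0 ∧ 0 ≤ β) ∨
          (a = 0 ∧ β < 0 ∧
            derivWithin (fun x => |x - y| ^ γ * f x) (Set.Icc a b) 0 = 0) →
        |quadError a b β γ y f N| ≤ K / (N : ℝ) ^ 2) ∧
      (a = 0 ∧ β < 0 →
        |quadError a b β γ y f N| ≤ K / (N : ℝ) ^ (2 + β))) := by
  have hb : 0 < b := lt_of_le_of_lt ha hab
  have hb1 : (0:ℝ) < β + 1 := by linarith
  have hy' : y < a ∨ b < y := by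
    rcases lt_or_ge y a with h | h
    · exact Or.inl h
    · right
      by_contra hc
      push_neg at hc
      exact hy ⟨h, hc⟩
  set s : Set ℝ := Set.Icc a b with hs
  have hsU : UniqueDiffOn ℝ s := uniqueDiffOn_Icc hab
  -- smoothness of the singular factor
  have hg2 : ContDiffOn ℝ 2 (fun x : ℝ => |x - y| ^ γ) s := by
    rcases hy' with h | h
    · apply ContDiffOn.congr (f := fun x : ℝ => (x - y) ^ γ)
      · intro x hx
        have hne : x ≠ y := by intro he; rw [he] at hx; exact absurd hx.1 (by linarith)
        exact (((contDiffAt_id.sub contDiffAt_const).rpow_const_of_ne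
          (by simpa using sub_ne_zero.mpr hne)).contDiffWithinAt)
      · intro x hx
        rw [abs_of_pos (by linarith [hx.1] : (0:ℝ) < x - y)]
    · apply ContDiffOn.congr (f := fun x : ℝ => (y - x) ^ γ)
      · intro x hx
        have hne : y ≠ x := by intro he; rw [← he] at hx; exact absurd hx.2 (by linarith)
        exact (((contDiffAt_const.sub contDiffAt_id).rpow_const_of_ne
          (by simpa using sub_ne_zero.mpr hne)).contDiffWithinAt)
      · intro x hx
        rw [abs_of_neg (by linarith [hx.2] : x - y < 0), neg_sub]
  have hφ : ContDiffOn ℝ 2 (fun x : ℝ => |x - y| ^ γ * f x) s := hg2.mul hf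
  -- derivatives
  set φ' : ℝ → ℝ := derivWithin (fun x : ℝ => |x - y| ^ γ * f x) s with hφ'def
  set g2' : ℝ → ℝ := derivWithin (fun x : ℝ => |x - y| ^ γ) s with hg2'def
  set φ'' : ℝ → ℝ := derivWithin φ' s with hφ''def
  set g2'' : ℝ → ℝ := derivWithin g2' s with hg2''def
  have hcφ' : ContDiffOn ℝ 1 φ' s := hφ.derivWithin hsU (by norm_num)
  have hcg2' : ContDiffOn ℝ 1 g2' s := hg2.derivWithin hsU (by norm_num)
  have hdφ : ∀ x ∈ s, HasDerivWithinAt (fun x : ℝ => |x - y| ^ γ * f x) (φ' x) s x :=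
    fun x hx => ((hφ.differentiableOn (by norm_num)) x hx).hasDerivWithinAt
  have hdg2 : ∀ x ∈ s, HasDerivWithinAt (fun x : ℝ => |x - y| ^ γ) (g2' x) s x :=
    fun x hx => ((hg2.differentiableOn (by norm_num)) x hx).hasDerivWithinAt
  have hdφ' : ∀ x ∈ s, HasDerivWithinAt φ' (φ'' x) s x :=
    fun x hx => ((hcφ'.differentiableOn one_ne_zero) x hx).hasDerivWithinAt
  have hdg2' : ∀ x ∈ s, HasDerivWithinAt g2' (g2'' x) s x :=
    fun x hx => ((hcg2'.differentiableOn one_ne_zero) x hx).hasDerivWithinAt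
  -- bounds
  obtain ⟨M1, hM1⟩ := isCompact_Icc.exists_bound_of_continuousOn hf.continuousOn
  obtain ⟨M2, hM2⟩ := isCompact_Icc.exists_bound_of_continuousOn
    (hφ.continuousOn_derivWithin hsU (by norm_num))
  obtain ⟨M3, hM3⟩ := isCompact_Icc.exists_bound_of_continuousOn
    (hcφ'.continuousOn_derivWithin hsU (le_refl 1))
  obtain ⟨M4, hM4⟩ := isCompact_Icc.exists_bound_of_continuousOn
    (hcg2'.continuousOn_derivWithin hsU (le_refl 1))
  set M : ℝ := max 1 (max (max M1 M2) (max M3 M4)) with hMdef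
  have hM0 : 0 ≤ M := le_trans zero_le_one (le_max_left _ _)
  have hMf : ∀ x ∈ s, |f x| ≤ M := by
    intro x hx
    calc |f x| ≤ M1 := by rw [← Real.norm_eq_abs]; exact hM1 x hx
      _ ≤ M := le_trans (le_max_left _ _) (le_trans (le_max_left _ _) (le_max_right _ _))
  have hMφ' : ∀ x ∈ s, |φ' x| ≤ M := by
    intro x hx
    calc |φ' x| ≤ M2 := by rw [← Real.norm_eq_abs]; exact hM2 x hx
      _ ≤ M := le_trans (le_max_right _ _) (le_trans (le_max_left _ _) (le_max_right _ _))
  have hMφ'' : ∀ x ∈ s, |φ'' x| ≤ M := by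
    intro x hx
    calc |φ'' x| ≤ M3 := by rw [← Real.norm_eq_abs]; exact hM3 x hx
      _ ≤ M := le_trans (le_max_left _ _) (le_trans (le_max_right _ _) (le_max_right _ _))
  have hMg'' : ∀ x ∈ s, |g2'' x| ≤ M := by
    intro x hx
    calc |g2'' x| ≤ M4 := by rw [← Real.norm_eq_abs]; exact hM4 x hx
      _ ≤ M := le_trans (le_max_right _ _) (le_trans (le_max_right _ _) (le_max_right _ _))
  -- constants
  set CST : ℝ := (b ^ (β+1) - a ^ (β+1)) / (β+1) * (M + M*M) / 4 with hCSTdef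
  set CA : ℝ := M * |b ^ β - a ^ β| / 2 with hCAdef
  set CB : ℝ := M * (1/(2*(β+1)) + 1/2) with hCBdef
  set CC : ℝ := M * b ^ (β+1) / (4*(β+1)) + M * b ^ (β+1) * (1 + 1/(β+1)) with hCCdef
  have hSA0 : 0 ≤ (b ^ (β+1) - a ^ (β+1)) / (β+1) := by
    apply div_nonneg _ hb1.le
    nlinarith [Real.rpow_le_rpow ha hab.le hb1.le]
  have hCST0 : 0 ≤ CST := by
    rw [hCSTdef]
    have h1 : (0:ℝ) ≤ M + M*M := by nlinarith
    have := mul_nonneg (mul_nonneg hSA0 h1) (by norm_num : (0:ℝ) ≤ 1/4)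
    nlinarith
  have hCA0 : 0 ≤ CA := by
    rw [hCAdef]
    have := abs_nonneg (b ^ β - a ^ β)
    nlinarith
  have hCB0 : 0 ≤ CB := by
    rw [hCBdef]
    have h1 : (0:ℝ) ≤ 1/(2*(β+1)) := by positivity
    nlinarith
  have hbb1 : 0 ≤ b ^ (β+1) := Real.rpow_nonneg hb.le _
  have hCC0 : 0 ≤ CC := by
    rw [hCCdef]
    have h2 : (0:ℝ) ≤ 1 + 1/(β+1) := by
      have := one_div_pos.mpr hb1
      linarith
    have t1 : (0:ℝ) ≤ M * b ^ (β+1) / (4*(β+1)) := div_nonneg (mul_nonneg hM0 hbb1) (by linarith)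
    have t2 : (0:ℝ) ≤ M * b ^ (β+1) * (1 + 1/(β+1)) := mul_nonneg (mul_nonneg hM0 hbb1) h2
    linarith
  have hba0 : (0:ℝ) ≤ b - a := by linarith
  have hbmA : (0:ℝ) ≤ (b-a)^2 := sq_nonneg _
  have hbm2 : (0:ℝ) ≤ (b-a) ^ (2+β) := Real.rpow_nonneg hba0 _
  have hbneg : (0:ℝ) ≤ b ^ (-β) := Real.rpow_nonneg hb.le _
  set K : ℝ := 1 + (b-a)^2 * (CST + CA + CC) + (b-a) ^ (2+β) * (CST * b ^ (-β) + CB) with hKdef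
  have hK : 0 < K := by
    rw [hKdef]
    have h1 : 0 ≤ (b-a)^2 * (CST + CA + CC) := mul_nonneg hbmA (by linarith)
    have h2 : 0 ≤ (b-a)^(2+β) * (CST * b^(-β) + CB) :=
      mul_nonneg hbm2 (by nlinarith [mul_nonneg hCST0 hbneg])
    linarith
  refine ⟨K, hK, fun N hN => ?_⟩
  have hNR : (0:ℝ) < N := by exact_mod_cast Nat.lt_of_lt_of_le Nat.zero_lt_one hN
  have hN2 : (0:ℝ) < (N:ℝ)^2 := by positivity
  have hN2β : (0:ℝ) < (N:ℝ) ^ (2+β) := Real.rpow_pos_of_pos hNR _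
  set H : ℝ := (b-a)/(N:ℝ) with hHdef
  have hh : 0 < H := by rw [hHdef]; exact div_pos (by linarith) hNR
  have hHba : H ≤ b - a := by
    rw [hHdef]
    calc (b-a)/(N:ℝ) ≤ (b-a)/1 := by
          apply div_le_div_of_nonneg_left (by linarith) one_pos
          exact_mod_cast hN
      _ = b - a := div_one _
  have hHpow : H^2 = (b-a)^2/(N:ℝ)^2 := by rw [hHdef, div_pow]
  have hHpow2 : H ^ (2+β) = (b-a) ^ (2+β)/(N:ℝ) ^ (2+β) := by
    rw [hHdef, Real.div_rpow hba0 (Nat.cast_nonneg N)]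
  have hKA : ∀ C : ℝ, 0 ≤ C → C ≤ CST + CA + CC →
      C * H^2 ≤ K / (N:ℝ)^2 := by
    intro C hC0 hCle
    rw [hHpow, ← mul_div_assoc]
    apply (div_le_div_iff_of_pos_right hN2).mpr
    rw [hKdef]
    nlinarith [mul_nonneg hbm2 (add_nonneg (mul_nonneg hCST0 hbneg) hCB0),
      mul_le_mul_of_nonneg_right hCle hbmA]
  have hKB : ∀ C : ℝ, 0 ≤ C → C ≤ CST * b ^ (-β) + CB →
      C * H ^ (2+β) ≤ K / (N:ℝ) ^ (2+β) := by
    intro C hC0 hCle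
    rw [hHpow2, ← mul_div_assoc]
    apply (div_le_div_iff_of_pos_right hN2β).mpr
    rw [hKdef]
    nlinarith [mul_nonneg hbmA (add_nonneg (add_nonneg hCST0 hCA0) hCC0),
      mul_le_mul_of_nonneg_right hCle hbm2]
  have hstep2 : β ≤ 0 → CST * H^2 ≤ CST * b ^ (-β) * H ^ (2+β) := by
    intro hβle
    have hHb2 : H ≤ b := by linarith [hHba]
    have e2 : H ^ (2+β) = H ^ β * H * H := by
      rw [show (2:ℝ)+β = β+1+1 by ring, Real.rpow_add_one hh.ne', Real.rpow_add_one hh.ne']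
    have k2 : b ^ β ≤ H ^ β := Real.rpow_le_rpow_of_nonpos hh hHb2 hβle
    have k1 : b ^ (-β) * b ^ β = 1 := by
      rw [← Real.rpow_add hb]; simp
    have key : CST * H^2 = (CST * b ^ (-β) * (H * H)) * b ^ β := by
      calc CST * H^2 = CST * H^2 * (b ^ (-β) * b ^ β) := by rw [k1]; ring
        _ = (CST * b ^ (-β) * (H * H)) * b ^ β := by ring
    rw [key, e2]
    have hint1 := mul_le_mul_of_nonneg_left k2
      (mul_nonneg (mul_nonneg hCST0 hbneg) (mul_nonneg hh.le hh.le))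
    nlinarith [hint1]
  have hmain := aux_main a b β γ y ha hab hβ hγ hy' f hf M φ' g2' φ'' g2'' hdφ hdφ' hdg2 hdg2'
    hMf hMφ'' hMg'' N hN (fun n : ℕ => a + n * ((b-a)/N)) (fun n => rfl)
  beta_reduce at hmain
  rw [← hHdef] at hmain
  have hfirst : (b ^ (β+1) - a ^ (β+1))/(β+1) * ((M + M*M) * H^2/4) = CST * H^2 := by
    rw [hCSTdef]; ring
  rw [hfirst] at hmain
  constructor
  · -- O(1/N^2) cases
    intro hcase
    rcases hcase with h1 | h2 | h3
    · -- a > 0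
      have hS := aux_sumA a b β ha hab hβ M hM0 φ' hMφ' (Or.inl h1) N hN
        (fun n : ℕ => a + n * ((b-a)/N)) (fun n => rfl)
      beta_reduce at hS
      rw [← hCAdef, ← hHdef] at hS
      calc |quadError a b β γ y f N| ≤ CST * H^2 + CA * H^2 :=
            le_trans hmain (add_le_add_right hS _)
        _ = (CST + CA) * H^2 := by ring
        _ ≤ K / (N:ℝ)^2 := hKA _ (by linarith) (by linarith)
    · -- a = 0, β ≥ 0
      have hS := aux_sumA a b β ha hab hβ M hM0 φ' hMφ' (Or.inr h2.2) N hN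
        (fun n : ℕ => a + n * ((b-a)/N)) (fun n => rfl)
      beta_reduce at hS
      rw [← hCAdef, ← hHdef] at hS
      calc |quadError a b β γ y f N| ≤ CST * H^2 + CA * H^2 :=
            le_trans hmain (add_le_add_right hS _)
        _ = (CST + CA) * H^2 := by ring
        _ ≤ K / (N:ℝ)^2 := hKA _ (by linarith) (by linarith)
    · -- a = 0, β < 0, derivative vanishes at 0
      obtain ⟨ha0, hβneg, hder⟩ := h3
      have hb0ba : (b - 0 : ℝ) = b - a := by rw [ha0]
      have hdφ'0 : ∀ x ∈ Icc 0 b, HasDerivWithinAt φ' (φ'' x) (Icc 0 b) x := by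
        have := hdφ'; rw [hs, ha0] at this; exact this
      have hMφ''0 : ∀ x ∈ Icc 0 b, |φ'' x| ≤ M := by
        have := hMφ''; rw [hs, ha0] at this; exact this
      have hS := aux_sumC b β hb hβ hβneg M hM0 φ' φ'' hdφ'0 hMφ''0 hder N hN
        (fun n : ℕ => a + n * ((b-a)/N)) (fun n => by rw [ha0])
      beta_reduce at hS
      rw [← hCCdef, hb0ba, ← hHdef] at hS
      calc |quadError a b β γ y f N| ≤ CST * H^2 + CC * H^2 :=
            le_trans hmain (add_le_add_right hS _)
        _ = (CST + CC) * H^2 := by ring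
        _ ≤ K / (N:ℝ)^2 := hKA _ (by linarith) (by linarith)
  · -- O(1/N^(2+β)) case
    rintro ⟨ha0, hβneg⟩
    have hb0ba : (b - 0 : ℝ) = b - a := by rw [ha0]
    have hMφ'0 : ∀ x ∈ Icc 0 b, |φ' x| ≤ M := by
      have := hMφ'; rw [hs, ha0] at this; exact this
    have hS := aux_sumB b β hb hβ hβneg M hM0 φ' hMφ'0 N hN
      (fun n : ℕ => a + n * ((b-a)/N)) (fun n => by rw [ha0])
    beta_reduce at hS
    rw [← hCBdef, hb0ba, ← hHdef] at hS
    calc |quadError a b β γ y f N| ≤ CST * b ^ (-β) * H ^ (2+β) + CB * H ^ (2+β) := by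
          refine le_trans hmain (le_trans (add_le_add_right hS _) ?_)
          have := hstep2 hβneg.le
          linarith only [this]
      _ = (CST * b ^ (-β) + CB) * H ^ (2+β) := by ring
      _ ≤ K / (N:ℝ) ^ (2+β) := hKB _ (by nlinarith [mul_nonneg hCST0 hbneg]) (le_refl _)
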